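/- arXiv:1808.09067 — 2 statements merged into one kernel-verified Lean document; each statement's English description precedes it below -/
import Mathlib

section
/- Truncated De Rham–Saito division: let α = Σ_i a_i·dx_i/x_i + Σ_j b_j·dy_j be a 0-final dominant logarithmic 1-form (equivalently, ν_A(α) = 0 and at least one a_i is a unit of R). Let ρ ∈ ℝ and let β be a logarithmic 1-form with ν_A(α ∧ β) ≥ ρ. Then there exist H ∈ R and a logarithmic 1-form β̃ with ν_A(β̃) ≥ ρ such that β = H·α + β̃. -/
noncomputable section
open MvPowerSeries Classical

section Core

variable {k : Type} [Field k] {σ : Type}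

/-- Weighted value of an exponent. -/
def wtG (W : σ → ℝ) (e : σ →₀ ℕ) : ℝ := e.sum fun i m => (m : ℝ) * W i

/-- Explicit value of a formal power series. -/
def nuG (W : σ → ℝ) (f : MvPowerSeries σ k) : EReal :=
  sInf {v : EReal | ∃ e : σ →₀ ℕ, MvPowerSeries.coeff (R := k) e f ≠ 0 ∧ v = ((wtG W e : ℝ) : EReal)}

/-- Derivative operators: `x·∂/∂x` for logarithmic variables, `∂/∂y` for plain ones. -/
def DopG (isLog : σ → Bool) (b : σ) (f : MvPowerSeries σ k) : MvPowerSeries σ k :=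
  fun e => if isLog b then (e b : k) * MvPowerSeries.coeff (R := k) e f
    else ((e b : k) + 1) * MvPowerSeries.coeff (R := k) (e + Finsupp.single b 1) f

/-- The differential of a function as a logarithmic 1-form. -/
def dFnG (isLog : σ → Bool) (f : MvPowerSeries σ k) : σ → MvPowerSeries σ k :=
  fun b => DopG isLog b f

/-- Explicit value of a logarithmic 1-form. -/
def nu1G (W : σ → ℝ) (ω : σ → MvPowerSeries σ k) : EReal := ⨅ b, nuG W (ω b)

/-- Wedge of two 1-forms, as an alternating 2-tensor. -/
def w2G (α β : σ → MvPowerSeries σ k) : σ → σ → MvPowerSeries σ k :=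
  fun a b => α a * β b - α b * β a

/-- Exterior derivative of a 1-form, as an alternating 2-tensor. -/
def dF1G (isLog : σ → Bool) (ω : σ → MvPowerSeries σ k) : σ → σ → MvPowerSeries σ k :=
  fun a b => DopG isLog a (ω b) - DopG isLog b (ω a)

/-- Explicit value of a 2-form. -/
def nu2G (W : σ → ℝ) (Ω : σ → σ → MvPowerSeries σ k) : EReal := ⨅ a, ⨅ b, nuG W (Ω a b)

/-- Wedge of a 1-form with a 2-form, as an alternating 3-tensor. -/
def w12G (θ : σ → MvPowerSeries σ k) (Ω : σ → σ → MvPowerSeries σ k) :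
    σ → σ → σ → MvPowerSeries σ k :=
  fun a b c => θ a * Ω b c - θ b * Ω a c + θ c * Ω a b

/-- Explicit value of a 3-form. -/
def nu3G (W : σ → ℝ) (T : σ → σ → σ → MvPowerSeries σ k) : EReal :=
  ⨅ a, ⨅ b, ⨅ c, nuG W (T a b c)

/-- `f` is dominant at its own explicit value: the value is realized by a monomial
purely in the distinguished (`isX`) variables. -/
def DomAtG (W : σ → ℝ) (isX : σ → Prop) (f : MvPowerSeries σ k) : Prop :=
  ∃ e : σ →₀ ℕ, (∀ i, ¬ isX i → e i = 0) ∧ MvPowerSeries.coeff (R := k) e f ≠ 0 ∧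
    ((wtG W e : ℝ) : EReal) = nuG W f

/-- `f` is `γ`-final dominant. -/
def FinalDomFnG (W : σ → ℝ) (isX : σ → Prop) (γ : ℝ) (f : MvPowerSeries σ k) : Prop :=
  nuG W f ≤ (γ : EReal) ∧ DomAtG W isX f

/-- A 1-form is dominant at its own explicit value: realized by a `dx_i/x_i`-coefficient. -/
def Dom1AtG (W : σ → ℝ) (isX : σ → Prop) (ω : σ → MvPowerSeries σ k) : Prop :=
  ∃ i, isX i ∧ nuG W (ω i) = nu1G W ω ∧ DomAtG W isX (ω i)

/-- A 1-form is `γ`-final dominant. -/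
def FinalDom1G (W : σ → ℝ) (isX : σ → Prop) (γ : ℝ) (ω : σ → MvPowerSeries σ k) : Prop :=
  nu1G W ω ≤ (γ : EReal) ∧ Dom1AtG W isX ω

end Core


section Aux

variable {k : Type} [Field k] {σ : Type}

lemma wtG_nonneg {W : σ → ℝ} (hW : ∀ i, 0 ≤ W i) (e : σ →₀ ℕ) : 0 ≤ wtG W e :=
  Finset.sum_nonneg fun i _ => mul_nonneg (Nat.cast_nonneg _) (hW i)

lemma wtG_add (W : σ → ℝ) (e1 e2 : σ →₀ ℕ) : wtG W (e1 + e2) = wtG W e1 + wtG W e2 := by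
  unfold wtG
  rw [Finsupp.sum_add_index']
  · intro i; simp
  · intro i m1 m2; push_cast; ring

lemma nuG_nonneg {W : σ → ℝ} (hW : ∀ i, 0 ≤ W i) (f : MvPowerSeries σ k) :
    (0 : EReal) ≤ nuG W f := by
  apply le_sInf
  rintro v ⟨e, -, rfl⟩
  exact_mod_cast wtG_nonneg hW e

lemma nuG_le_mul {W : σ → ℝ} (hW : ∀ i, 0 ≤ W i) (f g : MvPowerSeries σ k) :
    nuG W f ≤ nuG W (f * g) := by
  apply le_sInf
  rintro v ⟨e, he, rfl⟩
  rw [MvPowerSeries.coeff_mul] at he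
  obtain ⟨p, hp, hne⟩ := Finset.exists_ne_zero_of_sum_ne_zero he
  have h1 : MvPowerSeries.coeff (R := k) p.1 f ≠ 0 := fun h => hne (by rw [h, zero_mul])
  have hle : nuG W f ≤ ((wtG W p.1 : ℝ) : EReal) := sInf_le ⟨p.1, h1, rfl⟩
  refine hle.trans ?_
  rw [EReal.coe_le_coe_iff]
  have heq : wtG W e = wtG W p.1 + wtG W p.2 := by
    rw [← wtG_add]
    congr 1
    exact (Finset.HasAntidiagonal.mem_antidiagonal.mp hp).symm
  linarith [wtG_nonneg hW p.2]

end Aux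

abbrev Idx (r n : ℕ) := Sum (Fin r) (Fin n)

/-- truncated De Rham–Saito division: if `α` is a `0`-final dominant
logarithmic 1-form and `ν_A(α ∧ β) ≥ ρ`, then `β = H·α + β̃` with `ν_A(β̃) ≥ ρ`. -/
theorem statement3 {k : Type} [Field k] [CharZero k] {r n : ℕ} (hr : 0 < r)
    (w : Fin r → ℝ) (hw : ∀ i, 0 < w i) (hind : LinearIndependent ℚ w)
    (α β : Idx r n → MvPowerSeries (Idx r n) k) (ρ : ℝ)
    (hα : FinalDom1G (Sum.elim w fun _ => (0:ℝ)) (fun s => s.isLeft = true) 0 α)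
    (hβ : (ρ : EReal) ≤ nu2G (Sum.elim w fun _ => (0:ℝ)) (w2G α β)) :
    ∃ (H : MvPowerSeries (Idx r n) k) (βt : Idx r n → MvPowerSeries (Idx r n) k),
      (ρ : EReal) ≤ nu1G (Sum.elim w fun _ => (0:ℝ)) βt ∧
      ∀ b, β b = H * α b + βt b := by
  classical
  set W : Idx r n → ℝ := Sum.elim w fun _ => (0:ℝ) with hWdef
  have hW : ∀ i, 0 ≤ W i := by rintro (a | b) <;> simp [hWdef] <;> exact (hw _).le
  obtain ⟨hle, i, hiX, hval, e, he0, hce, hwe⟩ := hα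
  -- α i has nonzero constant coefficient
  have hnu0 : nuG W (α i) = 0 := by
    refine le_antisymm ?_ (nuG_nonneg hW _)
    rw [hval]; exact hle.trans (by norm_num)
  have hwt0 : wtG W e = 0 := by
    have := hwe.trans hnu0
    exact_mod_cast this
  have he : e = 0 := by
    ext j
    rcases j with a | b
    · by_contra hne
      have hjs : Sum.inl a ∈ e.support := Finsupp.mem_support_iff.mpr hne
      have hterm : ∀ j ∈ e.support, (0:ℝ) ≤ (e j : ℝ) * W j :=
        fun j _ => mul_nonneg (Nat.cast_nonneg _) (hW j)
      have := (Finset.sum_eq_zero_iff_of_nonneg hterm).mp hwt0 (Sum.inl a) hjs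
      have hWa : W (Sum.inl a) = w a := rfl
      rw [hWa] at this
      have : (e (Sum.inl a) : ℝ) = 0 := by
        rcases mul_eq_zero.mp this with h | h
        · exact h
        · exact absurd h (ne_of_gt (hw a))
      exact hne (by exact_mod_cast this)
    · exact he0 (Sum.inr b) (by simp)
  rw [he] at hce
  have hc : MvPowerSeries.constantCoeff (R := k) (α i) ≠ 0 := by
    rwa [← MvPowerSeries.coeff_zero_eq_constantCoeff]
  have hinv : (α i)⁻¹ * α i = 1 := MvPowerSeries.inv_mul_cancel _ hc
  refine ⟨β i * (α i)⁻¹, fun b => β b - (β i * (α i)⁻¹) * α b, ?_, fun b => by ring⟩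
  apply le_iInf
  intro b
  have hbt : β b - (β i * (α i)⁻¹) * α b = w2G α β i b * (α i)⁻¹ := by
    simp only [w2G]
    linear_combination (-β b) * hinv
  show (ρ : EReal) ≤ nuG W (β b - β i * (α i)⁻¹ * α b)
  rw [hbt]
  refine le_trans ?_ (nuG_le_mul hW _ _)
  refine hβ.trans ?_
  exact le_trans (iInf_le _ i) (iInf_le _ b)
end
end

section
/- Truncated logarithmic Poincaré lemma: fix μ ∈ k^r and define d_μξ = (Σ_i μ_i·dx_i/x_i) ∧ ξ + dξ on logarithmic forms (on functions, d_μf = f·Σ_i μ_i·dx_i/x_i + df). Let ρ ∈ ℝ ∪ {+∞} (where ν_A(ξ) ≥ +∞ means ξ = 0) and let η be a logarithmic 1-form with ν_A(d_μη) ≥ ρ. Then there exist f ∈ R, λ ∈ k^r, and a logarithmic 1-form η̃ with ν_A(η̃) ≥ ρ such that η = d_μf + x^{−μ}·(Σ_i λ_i·dx_i/x_i) + η̃; moreover λ = 0 unless −μ ∈ ℤ_{≥0}^r (so the middle term, whose coefficients are λ_i·x^{−μ}, is present only when −μ has nonnegative integer entries, in which case x^{−μ} ∈ R is an honest monomial).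 -/
noncomputable section
open MvPowerSeries Classical

/-- The constant logarithmic 1-form `Σᵢ μᵢ · dxᵢ/xᵢ`. -/
def cFormM {k : Type} [Field k] {r n : ℕ} (μ : Fin r → k) :
    Idx r n → MvPowerSeries (Idx r n) k :=
  fun b => match b with
  | Sum.inl i => MvPowerSeries.C (σ := Idx r n) (R := k) (μ i)
  | Sum.inr _ => 0

/-- `d_μ f = f·Σ μᵢ dxᵢ/xᵢ + df`. -/
def dMuFn {k : Type} [Field k] {r n : ℕ} (μ : Fin r → k) (f : MvPowerSeries (Idx r n) k) :
    Idx r n → MvPowerSeries (Idx r n) k :=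
  fun b => cFormM μ b * f + DopG (fun s => s.isLeft) b f

/-- `d_μ η = (Σ μᵢ dxᵢ/xᵢ) ∧ η + dη` on 1-forms. -/
def dMu1 {k : Type} [Field k] {r n : ℕ} (μ : Fin r → k)
    (η : Idx r n → MvPowerSeries (Idx r n) k) :
    Idx r n → Idx r n → MvPowerSeries (Idx r n) k :=
  fun a b => w2G (cFormM μ) η a b + dF1G (fun s => s.isLeft) η a b

/-- The monomial `x^m`. -/
def xpowM {k : Type} [Field k] {r n : ℕ} (m : Fin r → ℕ) : MvPowerSeries (Idx r n) k :=
  MvPowerSeries.monomial (R := k) (Finsupp.equivFunOnFinite.symm (Sum.elim m fun _ => 0)) 1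

/-- The logarithmic 1-form `x^m · Σᵢ λᵢ dxᵢ/xᵢ`. -/
def midForm {k : Type} [Field k] {r n : ℕ} (m : Fin r → ℕ) (lam : Fin r → k) :
    Idx r n → MvPowerSeries (Idx r n) k :=
  fun b => match b with
  | Sum.inl i => MvPowerSeries.C (σ := Idx r n) (R := k) (lam i) * xpowM m
  | Sum.inr _ => 0

set_option linter.unusedSectionVars false

section Aux
variable {k : Type} [Field k] [CharZero k] {r n : ℕ}

lemma coeff_DopG_inl (i : Fin r) (f : MvPowerSeries (Idx r n) k) (e : Idx r n →₀ ℕ) :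
    MvPowerSeries.coeff (R := k) e (DopG (fun s : Idx r n => s.isLeft) (Sum.inl i) f)
      = (e (Sum.inl i) : k) * MvPowerSeries.coeff (R := k) e f := by
  rw [MvPowerSeries.coeff_apply]; simp [DopG]

lemma coeff_DopG_inr (j : Fin n) (f : MvPowerSeries (Idx r n) k) (e : Idx r n →₀ ℕ) :
    MvPowerSeries.coeff (R := k) e (DopG (fun s : Idx r n => s.isLeft) (Sum.inr j) f)
      = ((e (Sum.inr j) : k) + 1)
          * MvPowerSeries.coeff (R := k) (e + Finsupp.single (Sum.inr j) 1) f := by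
  rw [MvPowerSeries.coeff_apply]; simp [DopG]

lemma wt_eq (w : Fin r → ℝ) (e : Idx r n →₀ ℕ) :
    wtG (Sum.elim w fun _ => (0:ℝ)) e = ∑ i : Fin r, (e (Sum.inl i) : ℝ) * w i := by
  rw [wtG, Finsupp.sum_fintype]
  · rw [Fintype.sum_sum_type]; simp
  · intro a; simp

lemma wt_eq_of_inl (w : Fin r → ℝ) (e e' : Idx r n →₀ ℕ)
    (h : ∀ i, e (Sum.inl i) = e' (Sum.inl i)) :
    wtG (Sum.elim w fun _ => (0:ℝ)) e = wtG (Sum.elim w fun _ => (0:ℝ)) e' := by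
  rw [wt_eq, wt_eq]; simp [h]

def pickIdx (hr : 0 < r) (μ : Fin r → k) (v : Fin r → ℕ) : Fin r :=
  if h : ∃ i, μ i + (v i : k) ≠ 0 then h.choose else ⟨0, hr⟩

lemma pickIdx_spec (hr : 0 < r) (μ : Fin r → k) (v : Fin r → ℕ)
    (h : ∃ i, μ i + (v i : k) ≠ 0) :
    μ (pickIdx hr μ v) + (v (pickIdx hr μ v) : k) ≠ 0 := by
  rw [pickIdx, dif_pos h]; exact h.choose_spec

def solF (hr : 0 < r) (w : Fin r → ℝ) (μ : Fin r → k) (ρ : EReal)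
    (η : Idx r n → MvPowerSeries (Idx r n) k) : MvPowerSeries (Idx r n) k :=
  fun e =>
    if ρ ≤ ((wtG (Sum.elim w fun _ => (0:ℝ)) e : ℝ) : EReal) then 0
    else if ∀ i, μ i + (e (Sum.inl i) : k) = 0 then
      (if hy : ∃ j : Fin n, e (Sum.inr j) ≠ 0 then
        η (Sum.inr hy.choose) (e - Finsupp.single (Sum.inr hy.choose) 1)
          / ((e (Sum.inr hy.choose) : k))
      else 0)
    else
      η (Sum.inl (pickIdx hr μ fun i => e (Sum.inl i))) e
        / (μ (pickIdx hr μ fun i => e (Sum.inl i))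
            + (e (Sum.inl (pickIdx hr μ fun i => e (Sum.inl i))) : k))

end Aux

/-- truncated logarithmic Poincaré lemma: if `ν_A(d_μ η) ≥ ρ` then
`η = d_μ f + x^{−μ}·(Σ λᵢ dxᵢ/xᵢ) + η̃` with `ν_A(η̃) ≥ ρ`, where `λ = 0` unless
`−μ ∈ ℤ_{≥0}^r`. -/
theorem statement4 {k : Type} [Field k] [CharZero k] {r n : ℕ} (hr : 0 < r)
    (w : Fin r → ℝ) (hw : ∀ i, 0 < w i) (hind : LinearIndependent ℚ w)
    (μ : Fin r → k) (ρ : EReal) (hρ : ρ ≠ ⊥)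
    (η : Idx r n → MvPowerSeries (Idx r n) k)
    (hint : ρ ≤ nu2G (Sum.elim w fun _ => (0:ℝ)) (dMu1 μ η)) :
    ∃ (f : MvPowerSeries (Idx r n) k) (m : Fin r → ℕ) (lam : Fin r → k)
      (ηt : Idx r n → MvPowerSeries (Idx r n) k),
      ((∀ i, μ i = - ((m i : ℕ) : k)) ∨ lam = 0) ∧
      ρ ≤ nu1G (Sum.elim w fun _ => (0:ℝ)) ηt ∧
      ∀ b, η b = dMuFn μ f b + midForm m lam b + ηt b := by
  classical
  set W : Idx r n → ℝ := Sum.elim w fun _ => (0:ℝ) with hWdef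
  have Hcl : ∀ (a b : Idx r n) (e : Idx r n →₀ ℕ),
      ¬ ρ ≤ ((wtG W e : ℝ) : EReal) → MvPowerSeries.coeff (R := k) e (dMu1 μ η a b) = 0 := by
    intro a b e h
    by_contra hc
    exact h (le_trans (le_trans hint (le_trans (iInf_le _ a) (iInf_le _ b)))
      (sInf_le ⟨e, hc, rfl⟩))
  have R1 : ∀ (e : Idx r n →₀ ℕ), ¬ ρ ≤ ((wtG W e : ℝ) : EReal) → ∀ i j : Fin r,
      (μ i + (e (Sum.inl i) : k)) * MvPowerSeries.coeff (R := k) e (η (Sum.inl j))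
        = (μ j + (e (Sum.inl j) : k)) * MvPowerSeries.coeff (R := k) e (η (Sum.inl i)) := by
    intro e h i j
    have H := Hcl (Sum.inl i) (Sum.inl j) e h
    simp only [dMu1, w2G, dF1G, map_add, map_sub, cFormM, MvPowerSeries.coeff_C_mul,
      coeff_DopG_inl] at H
    linear_combination H
  have R2 : ∀ (e : Idx r n →₀ ℕ), ¬ ρ ≤ ((wtG W e : ℝ) : EReal) → ∀ (i : Fin r) (j : Fin n),
      (μ i + (e (Sum.inl i) : k)) * MvPowerSeries.coeff (R := k) e (η (Sum.inr j))
        = ((e (Sum.inr j) : k) + 1)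
            * MvPowerSeries.coeff (R := k) (e + Finsupp.single (Sum.inr j) 1) (η (Sum.inl i)) := by
    intro e h i j
    have H := Hcl (Sum.inl i) (Sum.inr j) e h
    simp only [dMu1, w2G, dF1G, map_add, map_sub, cFormM, MvPowerSeries.coeff_C_mul,
      coeff_DopG_inl, coeff_DopG_inr, zero_mul, map_zero] at H
    linear_combination H
  have R3 : ∀ (e : Idx r n →₀ ℕ), ¬ ρ ≤ ((wtG W e : ℝ) : EReal) → ∀ (i j : Fin n),
      ((e (Sum.inr i) : k) + 1)
          * MvPowerSeries.coeff (R := k) (e + Finsupp.single (Sum.inr i) 1) (η (Sum.inr j))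
        = ((e (Sum.inr j) : k) + 1)
            * MvPowerSeries.coeff (R := k) (e + Finsupp.single (Sum.inr j) 1) (η (Sum.inr i)) := by
    intro e h i j
    have H := Hcl (Sum.inr i) (Sum.inr j) e h
    simp only [dMu1, w2G, dF1G, map_add, map_sub, cFormM, MvPowerSeries.coeff_C_mul,
      coeff_DopG_inr, zero_mul, map_zero] at H
    linear_combination H
  -- choose m and lam
  obtain ⟨m, lam, hor, hA, hB⟩ : ∃ (m : Fin r → ℕ) (lam : Fin r → k),
      ((∀ i, μ i = - ((m i : ℕ) : k)) ∨ lam = 0) ∧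
      (∀ e : Idx r n →₀ ℕ, ¬ ρ ≤ ((wtG W e : ℝ) : EReal) →
        (∀ i, μ i + (e (Sum.inl i) : k) = 0) → (∀ j', e (Sum.inr j') = 0) →
        (e = Finsupp.equivFunOnFinite.symm (Sum.elim m fun _ => (0:ℕ)) ∧
          ∀ i, lam i = MvPowerSeries.coeff (R := k) e (η (Sum.inl i)))) ∧
      (lam = 0 ∨ ∀ i, μ i +
        (((Finsupp.equivFunOnFinite.symm (Sum.elim m fun _ => (0:ℕ)) : Idx r n →₀ ℕ))
          (Sum.inl i) : k) = 0) := by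
    by_cases hM : ∃ mv : Fin r → ℕ, ∀ i, μ i + (mv i : k) = 0
    · obtain ⟨mv, hmv⟩ := hM
      set eM : Idx r n →₀ ℕ := Finsupp.equivFunOnFinite.symm (Sum.elim mv fun _ => (0:ℕ))
        with heM
      have hEq : ∀ e : Idx r n →₀ ℕ, (∀ i, μ i + (e (Sum.inl i) : k) = 0) →
          (∀ j', e (Sum.inr j') = 0) → e = eM := by
        intro e h1 h2
        ext a
        rcases a with i | j
        · have hcast : ((e (Sum.inl i) : ℕ) : k) = ((mv i : ℕ) : k) := by
            linear_combination (h1 i) - (hmv i)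
          have : e (Sum.inl i) = mv i := Nat.cast_inj.mp hcast
          simp [heM, this]
        · simp [heM, h2 j]
      refine ⟨mv, if ρ ≤ ((wtG W eM : ℝ) : EReal) then 0
          else fun i => MvPowerSeries.coeff (R := k) eM (η (Sum.inl i)),
        Or.inl fun i => eq_neg_of_add_eq_zero_left (hmv i), ?_, ?_⟩
      · intro e he h1 h2
        have hEqe := hEq e h1 h2
        have hwt : wtG W e = wtG W eM := by rw [hEqe]
        rw [if_neg (by rw [← hwt]; exact he)]
        exact ⟨hEqe, fun i => by rw [hEqe]⟩
      · right; intro i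
        have hv : eM (Sum.inl i) = mv i := by simp [heM]
        rw [hv]; exact hmv i
    · refine ⟨fun _ => 0, 0, Or.inr rfl, ?_, Or.inl rfl⟩
      intro e he h1 h2
      exact absurd ⟨fun i => e (Sum.inl i), h1⟩ hM
  set eM : Idx r n →₀ ℕ := Finsupp.equivFunOnFinite.symm (Sum.elim m fun _ => (0:ℕ)) with heM
  have heMinl : ∀ i, eM (Sum.inl i) = m i := by intro i; simp [heM]
  have heMinr : ∀ j, eM (Sum.inr j) = 0 := by intro j; simp [heM]
  set F : MvPowerSeries (Idx r n) k := solF hr w μ ρ η with hFdef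
  -- main coefficientwise identity below ρ
  have Main : ∀ (b : Idx r n) (e : Idx r n →₀ ℕ), ¬ ρ ≤ ((wtG W e : ℝ) : EReal) →
      MvPowerSeries.coeff (R := k) e (η b)
        = MvPowerSeries.coeff (R := k) e (dMuFn μ F b)
          + MvPowerSeries.coeff (R := k) e (midForm m lam b) := by
    intro b e he
    rcases b with j | j
    · have hd : MvPowerSeries.coeff (R := k) e (dMuFn μ F (Sum.inl j))
          = (μ j + (e (Sum.inl j) : k)) * MvPowerSeries.coeff (R := k) e F := by
        simp only [dMuFn, map_add, cFormM, MvPowerSeries.coeff_C_mul, coeff_DopG_inl]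
        ring
      have hmid : MvPowerSeries.coeff (R := k) e (midForm m lam (Sum.inl j))
          = lam j * (if e = eM then 1 else 0) := by
        simp only [midForm, xpowM, MvPowerSeries.coeff_C_mul, MvPowerSeries.coeff_monomial,
          heM]
      rw [hd, hmid]
      by_cases hres : ∀ i, μ i + (e (Sum.inl i) : k) = 0
      · rw [hres j, zero_mul, zero_add]
        by_cases hy : ∃ j' : Fin n, e (Sum.inr j') ≠ 0
        · obtain ⟨j', hj'⟩ := hy
          have hne : e ≠ eM := by
            intro hEq; exact hj' (by rw [hEq, heMinr])
          rw [if_neg hne, mul_zero]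
          have hle : Finsupp.single (Sum.inr j' : Idx r n) 1 ≤ e := by
            rw [Finsupp.single_le_iff]; omega
          set e' : Idx r n →₀ ℕ := e - Finsupp.single (Sum.inr j') 1 with he'
          have hsum : e' + Finsupp.single (Sum.inr j') 1 = e := tsub_add_cancel_of_le hle
          have hinl : ∀ i, e' (Sum.inl i) = e (Sum.inl i) := by
            intro i; rw [he', Finsupp.tsub_apply]
            simp [Finsupp.single_apply]
          have hwt' : wtG W e' = wtG W e := wt_eq_of_inl w e' e hinl
          have h2 := R2 e' (by rw [hwt']; exact he) j j'
          rw [hsum] at h2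
          rw [hinl j, hres j, zero_mul] at h2
          have hnz : ((e' (Sum.inr j') : k) + 1) ≠ 0 := by
            have : ((e' (Sum.inr j') + 1 : ℕ) : k) ≠ 0 :=
              Nat.cast_ne_zero.mpr (Nat.succ_ne_zero _)
            push_cast at this; exact this
          rcases mul_eq_zero.mp h2.symm with h | h
          · exact absurd h hnz
          · exact h
        · push_neg at hy
          obtain ⟨hEq, hlam⟩ := hA e he hres hy
          rw [if_pos (by rw [hEq]), mul_one]
          exact (hlam j).symm
      · have hmid0 : lam j * (if e = eM then 1 else 0) = 0 := by
          rcases hB with h0 | hresM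
          · rw [h0]; simp
          · have hne : e ≠ eM := by
              intro hEq; exact hres (by rw [hEq]; exact hresM)
            rw [if_neg hne, mul_zero]
        rw [hmid0, add_zero]
        have hx : ∃ i, μ i + ((fun i => e (Sum.inl i)) i : k) ≠ 0 := by
          rcases not_forall.mp hres with ⟨i, hi⟩; exact ⟨i, hi⟩
        have hFe : MvPowerSeries.coeff (R := k) e F
            = MvPowerSeries.coeff (R := k) e (η (Sum.inl (pickIdx hr μ fun i => e (Sum.inl i))))
              / (μ (pickIdx hr μ fun i => e (Sum.inl i))
                  + (e (Sum.inl (pickIdx hr μ fun i => e (Sum.inl i))) : k)) := by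
          rw [hFdef, MvPowerSeries.coeff_apply, solF, if_neg he, if_neg hres,
            MvPowerSeries.coeff_apply]
        rw [hFe]
        set i0 : Fin r := pickIdx hr μ fun i => e (Sum.inl i) with hi0
        have hD : μ i0 + (e (Sum.inl i0) : k) ≠ 0 := pickIdx_spec hr μ _ hx
        have h1 := R1 e he i0 j
        field_simp
        linear_combination h1
    · have hd : MvPowerSeries.coeff (R := k) e (dMuFn μ F (Sum.inr j))
          = ((e (Sum.inr j) : k) + 1)
              * MvPowerSeries.coeff (R := k) (e + Finsupp.single (Sum.inr j) 1) F := by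
        simp only [dMuFn, map_add, cFormM, zero_mul, map_zero, coeff_DopG_inr, zero_add]
      have hmid : MvPowerSeries.coeff (R := k) e (midForm m lam (Sum.inr j)) = 0 := by
        simp [midForm]
      rw [hd, hmid, add_zero]
      set ep : Idx r n →₀ ℕ := e + Finsupp.single (Sum.inr j) 1 with hep
      have hepinl : ∀ i, ep (Sum.inl i) = e (Sum.inl i) := by
        intro i; rw [hep]; simp [Finsupp.single_apply]
      have hwtp : wtG W ep = wtG W e := wt_eq_of_inl w ep e hepinl
      have hep' : ¬ ρ ≤ ((wtG W ep : ℝ) : EReal) := by rw [hwtp]; exact he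
      have hxv : (fun i => ep (Sum.inl i)) = fun i => e (Sum.inl i) := funext hepinl
      by_cases hres : ∀ i, μ i + (e (Sum.inl i) : k) = 0
      · have hresp : ∀ i, μ i + (ep (Sum.inl i) : k) = 0 := by
          intro i; rw [hepinl i]; exact hres i
        have hy : ∃ j'' : Fin n, ep (Sum.inr j'') ≠ 0 := by
          refine ⟨j, ?_⟩
          rw [hep, Finsupp.add_apply, Finsupp.single_apply, if_pos rfl]
          exact Nat.succ_ne_zero _
        have hFe : MvPowerSeries.coeff (R := k) ep F
            = MvPowerSeries.coeff (R := k) (ep - Finsupp.single (Sum.inr hy.choose) 1)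
                (η (Sum.inr hy.choose)) / ((ep (Sum.inr hy.choose) : k)) := by
          rw [hFdef, MvPowerSeries.coeff_apply, solF, if_neg hep', if_pos hresp, dif_pos hy,
            MvPowerSeries.coeff_apply]
        rw [hFe]
        have hj' : ep (Sum.inr hy.choose) ≠ 0 := hy.choose_spec
        generalize hg : hy.choose = j' at hj' hFe
        rcases eq_or_ne j' j with hjj | hjj
        · subst hjj
          have hsub : ep - Finsupp.single (Sum.inr j') 1 = e := by
            rw [hep, add_tsub_cancel_right]
          have hval : (ep (Sum.inr j') : k) = (e (Sum.inr j') : k) + 1 := by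
            rw [hep, Finsupp.add_apply, Finsupp.single_apply, if_pos rfl]; push_cast; ring
          rw [hsub, hval]
          have hnz : ((e (Sum.inr j') : k) + 1) ≠ 0 := by
            have : ((e (Sum.inr j') + 1 : ℕ) : k) ≠ 0 :=
              Nat.cast_ne_zero.mpr (Nat.succ_ne_zero _)
            push_cast at this; exact this
          field_simp
        · have hepj' : ep (Sum.inr j') = e (Sum.inr j') := by
            rw [hep]; simp [Finsupp.single_apply, Sum.inr.injEq, hjj, Ne.symm hjj]
          have hj'e : e (Sum.inr j') ≠ 0 := by rw [← hepj']; exact hj'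
          have hle : Finsupp.single (Sum.inr j' : Idx r n) 1 ≤ e := by
            rw [Finsupp.single_le_iff]; omega
          set e3 : Idx r n →₀ ℕ := e - Finsupp.single (Sum.inr j') 1 with he3
          have hsum3 : e3 + Finsupp.single (Sum.inr j') 1 = e := tsub_add_cancel_of_le hle
          have hinl3 : ∀ i, e3 (Sum.inl i) = e (Sum.inl i) := by
            intro i; rw [he3, Finsupp.tsub_apply]; simp [Finsupp.single_apply]
          have hwt3 : wtG W e3 = wtG W e := wt_eq_of_inl w e3 e hinl3
          have h3 := R3 e3 (by rw [hwt3]; exact he) j' j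
          rw [hsum3] at h3
          have hv1 : ((e3 (Sum.inr j') : k) + 1) = (e (Sum.inr j') : k) := by
            have : e3 (Sum.inr j') + 1 = e (Sum.inr j') := by
              rw [he3, Finsupp.tsub_apply, Finsupp.single_apply, if_pos rfl]
              omega
            rw [← this]; push_cast; ring
          have hne' : (Sum.inr j' : Idx r n) ≠ Sum.inr j := by
            simpa using hjj
          have hv2 : (e3 (Sum.inr j) : k) = (e (Sum.inr j) : k) := by
            have hvv : e3 (Sum.inr j) = e (Sum.inr j) := by
              rw [he3, Finsupp.tsub_apply, Finsupp.single_apply, if_neg hne', Nat.sub_zero]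
            rw [hvv]
          have hv3 : e3 + Finsupp.single (Sum.inr j) 1
              = ep - Finsupp.single (Sum.inr j') 1 := by
            ext a
            have h1 : 1 ≤ e (Sum.inr j') := Nat.one_le_iff_ne_zero.mpr hj'e
            simp only [he3, hep, Finsupp.add_apply, Finsupp.tsub_apply,
              Finsupp.single_apply]
            by_cases ha : (Sum.inr j' : Idx r n) = a
            · subst ha
              simp only [if_pos rfl, if_neg (Ne.symm hne')]
              omega
            · by_cases hb : (Sum.inr j : Idx r n) = a
              · simp only [if_neg ha, if_pos hb]; omega
              · simp only [if_neg ha, if_neg hb]; omega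
          rw [hv1, hv2, hv3] at h3
          have hnzk : ((e (Sum.inr j') : ℕ) : k) ≠ 0 := Nat.cast_ne_zero.mpr hj'e
          rw [hepj']
          field_simp
          linear_combination h3
      · have hresp : ¬ ∀ i, μ i + (ep (Sum.inl i) : k) = 0 := by
          intro hc; exact hres fun i => by rw [← hepinl i]; exact hc i
        have hFe : MvPowerSeries.coeff (R := k) ep F
            = MvPowerSeries.coeff (R := k) ep (η (Sum.inl (pickIdx hr μ fun i => e (Sum.inl i))))
              / (μ (pickIdx hr μ fun i => e (Sum.inl i))
                  + (e (Sum.inl (pickIdx hr μ fun i => e (Sum.inl i))) : k)) := by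
          rw [hFdef, MvPowerSeries.coeff_apply, solF, if_neg hep', if_neg hresp, hxv,
            MvPowerSeries.coeff_apply]
          rw [hepinl]
        rw [hFe]
        set i0 : Fin r := pickIdx hr μ fun i => e (Sum.inl i) with hi0
        have hx : ∃ i, μ i + ((fun i => e (Sum.inl i)) i : k) ≠ 0 := by
          rcases not_forall.mp hres with ⟨i, hi⟩; exact ⟨i, hi⟩
        have hD : μ i0 + (e (Sum.inl i0) : k) ≠ 0 := pickIdx_spec hr μ _ hx
        have h2 := R2 e he i0 j
        field_simp
        linear_combination h2
  -- assemble
  refine ⟨F, m, lam, fun b => η b - dMuFn μ F b - midForm m lam b, hor, ?_, ?_⟩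
  · refine le_iInf fun b => le_sInf ?_
    rintro v ⟨e, hc, rfl⟩
    by_contra h
    push_neg at h
    apply hc
    have := Main b e (not_le.mpr h)
    simp only [map_sub]
    rw [this]; ring
  · intro b; ring
end
end
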